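/- Let G be a connected graph, R > 0, N an R-net of G, 𝒫 an R-partition centered at N, and H the R-minor induced by 𝒫. Let u, v ∈ N and let P be a shortest u–v path in G. If J = {w ∈ N : P ∩ 𝒫(w) ≠ ∅} is the set of clusters visited by P, then d_H(u,v) ≤ |J| − 1 ≤ length(P) = d_G(u,v). -/

import Mathlib

/-- The `R`-minor of `G` induced by a Voronoi partition. -/
def voronoiMinor {V : Type*} (G : SimpleGraph V) (N : Set V) (center : V → V) :
    SimpleGraph N where
  Adj u v := u ≠ v ∧ ∃ a b : V, G.Adj a b ∧ center a = ↑u ∧ center b = ↑v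
  symm := by
    constructor
    rintro u v ⟨h, a, b, hab, ha, hb⟩
    exact ⟨h.symm, b, a, hab.symm, hb, ha⟩
  loopless := by constructor; rintro u ⟨h, -⟩; exact h rfl

/-- Let `H` be the `R`-minor of a connected graph `G` induced
by an `R`-net `N` and an `R`-partition `𝒫` (the fibers of `center`). Let
`u, v ∈ N`, let `P` be a shortest `u`–`v` path in `G`, and let
`J = {w ∈ N : P ∩ 𝒫(w) ≠ ∅}` be the set of clusters visited by `P`. Then
`d_H(u,v) ≤ |J| − 1 ≤ length(P) = d_G(u,v)`. -/
theorem minor_dist_via_visited_clusters {V : Type*} [Fintype V]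
    (G : SimpleGraph V) (hG : G.Connected) (R : ℕ) (hR : 0 < R)
    (N : Set V) (center : V → V)
    (hsep : ∀ u ∈ N, ∀ v ∈ N, u ≠ v → R < G.dist u v)
    (hcov : ∀ v : V, ∃ y ∈ N, G.dist v y ≤ R)
    (hcen : ∀ v : V, center v ∈ N)
    (hfix : ∀ y ∈ N, center y = y)
    (hnear : ∀ v : V, ∀ y ∈ N, G.dist v (center v) ≤ G.dist v y)
    (hrad : ∀ v : V, G.dist v (center v) ≤ R)
    (hconn : ∀ y ∈ N, (G.induce {v : V | center v = y}).Connected)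
    (u v : V) (hu : u ∈ N) (hv : v ∈ N)
    (P : G.Walk u v) (hP : P.length = G.dist u v) :
    (voronoiMinor G N center).dist ⟨u, hu⟩ ⟨v, hv⟩ ≤
        {w : N | ∃ x ∈ P.support, center x = (w : V)}.ncard - 1 ∧
      {w : N | ∃ x ∈ P.support, center x = (w : V)}.ncard - 1 ≤ P.length := by
  classical
  set J : Set N := {w : N | ∃ x ∈ P.support, center x = (w : V)} with hJ
  haveI : Finite ↥N := N.toFinite
  have hJfin : J.Finite := Set.toFinite J
  -- Key: project any walk to a walk in the minor with support in the visited clusters.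
  have key : ∀ {a b : V} (Q : G.Walk a b),
      ∃ W : (voronoiMinor G N center).Walk ⟨center a, hcen a⟩ ⟨center b, hcen b⟩,
        ∀ w ∈ W.support, ∃ x ∈ Q.support, center x = (w : V) := by
    intro a b Q
    induction Q with
    | nil => exact ⟨SimpleGraph.Walk.nil, by simp⟩
    | @cons a c b h Q' ih =>
      obtain ⟨W', hW'⟩ := ih
      by_cases hc : center a = center c
      · refine ⟨W'.copy (Subtype.ext hc.symm) rfl, ?_⟩
        intro w hw
        rw [SimpleGraph.Walk.support_copy] at hw
        obtain ⟨x, hx, hx2⟩ := hW' w hw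
        exact ⟨x, by simp [hx], hx2⟩
      · refine ⟨SimpleGraph.Walk.cons
          (show (voronoiMinor G N center).Adj ⟨center a, hcen a⟩ ⟨center c, hcen c⟩ from ⟨fun he => hc (congrArg Subtype.val he), a, c, h, rfl, rfl⟩) W', ?_⟩
        intro w hw
        rw [SimpleGraph.Walk.support_cons, List.mem_cons] at hw
        rcases hw with hw | hw
        · exact ⟨a, by simp, by rw [hw]⟩
        · obtain ⟨x, hx, hx2⟩ := hW' w hw
          exact ⟨x, by simp [hx], hx2⟩
  obtain ⟨W, hW⟩ := key P
  set W₂ := W.copy (show (⟨center u, hcen u⟩ : N) = ⟨u, hu⟩ from Subtype.ext (hfix u hu)) (show (⟨center v, hcen v⟩ : N) = ⟨v, hv⟩ from Subtype.ext (hfix v hv)) with hW₂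
  have hW₂sup : ∀ w ∈ W₂.support, w ∈ J := by
    intro w hw
    rw [hW₂, SimpleGraph.Walk.support_copy] at hw
    exact hW w hw
  constructor
  · -- d_H ≤ |J| - 1
    set Q := W₂.toPath.val with hQdef
    have hQsup : ∀ w ∈ Q.support, w ∈ J := fun w hw =>
      hW₂sup w (W₂.support_toPath_subset hw)
    have hnodup : Q.support.Nodup := W₂.toPath.prop.support_nodup
    have hlen : Q.length + 1 ≤ J.ncard := by
      have h1 : Q.support.toFinset.card = Q.length + 1 := by
        rw [List.toFinset_card_of_nodup hnodup, SimpleGraph.Walk.length_support]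
      have h2 : (Q.support.toFinset : Set N) ⊆ J := by
        intro w hw
        simp only [Finset.coe_sort_coe, List.coe_toFinset, Set.mem_setOf_eq] at hw
        exact hQsup w hw
      calc Q.length + 1 = (Q.support.toFinset : Set N).ncard := by
            rw [Set.ncard_coe_finset, h1]
        _ ≤ J.ncard := Set.ncard_le_ncard h2 hJfin
      -- done
    have hd : (voronoiMinor G N center).dist ⟨u, hu⟩ ⟨v, hv⟩ ≤ Q.length :=
      SimpleGraph.dist_le Q
    omega
  · -- |J| - 1 ≤ P.length
    have hsub : J ⊆ ↑(P.support.toFinset.image (fun x => (⟨center x, hcen x⟩ : N))) := by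
      rintro w ⟨x, hx, hx2⟩
      simp only [Finset.coe_image, Set.mem_image, Finset.mem_coe, List.mem_toFinset]
      exact ⟨x, by simpa using hx, Subtype.ext hx2⟩
    have := Set.ncard_le_ncard hsub (Finset.finite_toSet _)
    rw [Set.ncard_coe_finset] at this
    have h2 : (P.support.toFinset.image (fun x => (⟨center x, hcen x⟩ : N))).card
        ≤ P.support.length :=
      le_trans (Finset.card_image_le) (P.support.toFinset_card_le)
    rw [SimpleGraph.Walk.length_support] at h2
    omega
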